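/- arXiv:1911.12274 — 2 statements merged into one kernel-verified Lean document; each statement's English description precedes it below -/
import Mathlib

section
/- For a polynomial p = Σᵢ cᵢxⁱ over a hyperfield H and an element a ∈ H, the following are equivalent: (1) 0 ∈ ⊞ᵢ cᵢaⁱ; (2) there exist d₀, …, d_{n−1} ∈ H with c₀ = −a·d₀, cᵢ ∈ (−a·dᵢ) ⊞ d_{i−1} for 1 ≤ i ≤ n−1, and cₙ = d_{n−1} (i.e. p ∈ (x − a)·q where q = Σ dᵢxⁱ). -/
/-- A hyperring: a commutative monoid-with-zero together with a multivalued
addition satisfying commutativity, associativity, `0 ⊞ a = {a}`, unique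
hyperinverses, distributivity and reversibility. -/
structure Hyperring (H : Type) where
  mul : H → H → H
  one : H
  zero : H
  neg : H → H
  add : H → H → Set H
  add_nonempty : ∀ a b, (add a b).Nonempty
  mul_assoc : ∀ a b c, mul (mul a b) c = mul a (mul b c)
  mul_comm : ∀ a b, mul a b = mul b a
  one_mul : ∀ a, mul one a = a
  zero_mul : ∀ a, mul zero a = zero
  add_comm : ∀ a b, add a b = add b a
  add_assoc : ∀ a b c, (⋃ d ∈ add b c, add a d) = ⋃ d ∈ add a b, add d c
  zero_add : ∀ a, add zero a = {a}
  neg_spec : ∀ a, zero ∈ add a (neg a)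
  neg_unique : ∀ a b, zero ∈ add a b → b = neg a
  distrib : ∀ a b c, (mul a) '' (add b c) = add (mul a b) (mul a c)
  reverse : ∀ a b c, a ∈ add b c ↔ neg b ∈ add a c

/-- Iterated hypersum of a list of elements of a hyperring. -/
def hsum {H : Type} (R : Hyperring H) : List H → Set H
  | [] => {R.zero}
  | a :: l => ⋃ b ∈ hsum R l, R.add a b

/-- A hyperfield: a hyperring where `0 ≠ 1` and nonzero elements are invertible. -/
structure Hyperfield (H : Type) extends Hyperring H where
  zero_ne_one : zero ≠ one
  inv : H → H
  mul_inv : ∀ a, a ≠ zero → mul a (inv a) = one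

/-- Iterated powers in a hyperring. -/
def hpow {H : Type} (R : Hyperring H) (a : H) : ℕ → H
  | 0 => R.one
  | n + 1 => R.mul a (hpow R a n)

section Helpers
variable {H : Type} (R : Hyperring H)

lemma hr_mul_one (a : H) : R.mul a R.one = a := by rw [R.mul_comm, R.one_mul]

lemma hr_mul_zero (a : H) : R.mul a R.zero = R.zero := by rw [R.mul_comm, R.zero_mul]

lemma hr_add_zero (a : H) : R.add a R.zero = {a} := by rw [R.add_comm, R.zero_add]

lemma hr_neg_zero : R.neg R.zero = R.zero :=
  (R.neg_unique R.zero R.zero (by rw [R.zero_add]; rfl)).symm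

lemma hr_neg_neg (a : H) : R.neg (R.neg a) = a :=
  (R.neg_unique (R.neg a) a (by rw [R.add_comm]; exact R.neg_spec a)).symm

lemma hr_neg_mul (a b : H) : R.mul (R.neg a) b = R.neg (R.mul a b) := by
  have h0 : R.zero ∈ R.add (R.mul b a) (R.mul b (R.neg a)) := by
    rw [← R.distrib b a (R.neg a)]
    exact ⟨R.zero, R.neg_spec a, hr_mul_zero R b⟩
  have h := R.neg_unique _ _ h0
  rw [R.mul_comm (R.neg a) b, R.mul_comm a b]
  exact h

lemma hr_mul_mem (w x y z : H) (h : x ∈ R.add y z) :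
    R.mul w x ∈ R.add (R.mul w y) (R.mul w z) := by
  rw [← R.distrib]; exact ⟨x, h, rfl⟩

lemma hr_neg_mem_iff (x y z : H) :
    R.neg x ∈ R.add (R.neg y) (R.neg z) ↔ x ∈ R.add y z := by
  constructor
  · intro h
    have h2 := hr_mul_mem R (R.neg R.one) _ _ _ h
    rw [hr_neg_mul, hr_neg_mul, hr_neg_mul, R.one_mul, R.one_mul, R.one_mul,
        hr_neg_neg, hr_neg_neg, hr_neg_neg] at h2
    exact h2
  · intro h
    have h2 := hr_mul_mem R (R.neg R.one) _ _ _ h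
    rw [hr_neg_mul, hr_neg_mul, hr_neg_mul, R.one_mul, R.one_mul, R.one_mul] at h2
    exact h2

lemma hr_flip2 (x y z : H) : x ∈ R.add y (R.neg z) ↔ x ∈ R.add y z := by
  have key : ∀ u v w : H, u ∈ R.add v w → u ∈ R.add v (R.neg w) := by
    intro u v w h
    have h1 := (R.reverse u v w).mp h
    have h2 : R.neg v ∈ R.add (R.neg (R.neg u)) (R.neg (R.neg w)) := by
      rw [hr_neg_neg, hr_neg_neg]; exact h1
    have h3 := (hr_neg_mem_iff R v (R.neg u) (R.neg w)).mp h2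
    have h4 := (R.reverse v (R.neg u) (R.neg w)).mp h3
    rw [hr_neg_neg] at h4
    exact h4
  constructor
  · intro h
    have := key x y (R.neg z) h
    rw [hr_neg_neg] at this
    exact this
  · exact key x y z

lemma hr_flip1 (x y z : H) : x ∈ R.add (R.neg y) z ↔ x ∈ R.add y z := by
  rw [R.add_comm (R.neg y) z, hr_flip2, R.add_comm z y]

lemma hr_flipelt (x y z : H) : R.neg x ∈ R.add y z ↔ x ∈ R.add y z := by
  rw [← hr_neg_mem_iff R x y z, hr_flip1, hr_flip2]

lemma hr_rev_iff (x y z : H) : x ∈ R.add y z ↔ y ∈ R.add (R.neg z) x := by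
  constructor
  · intro h
    have h1 := (R.reverse x y z).mp h
    rw [hr_flipelt] at h1
    rw [R.add_comm] at h1
    rw [hr_flip1]
    exact h1
  · intro h
    rw [hr_flip1, R.add_comm] at h
    rw [← hr_flipelt] at h
    exact (R.reverse x y z).mpr h

end Helpers

section FieldHelpers
variable {H : Type} (F : Hyperfield H)

lemma hf_mul_left_cancel {z : H} (hz : z ≠ F.zero) (x y : H)
    (h : F.mul z x = F.mul z y) : x = y := by
  have h2 := congrArg (F.mul (F.inv z)) h
  rw [← F.mul_assoc, ← F.mul_assoc, F.mul_comm (F.inv z) z, F.mul_inv z hz,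
      F.one_mul, F.one_mul] at h2
  exact h2

lemma hf_mul_eq_zero {z x : H} (hz : z ≠ F.zero) (h : F.mul z x = F.zero) :
    x = F.zero := by
  apply hf_mul_left_cancel F hz
  rw [h, hr_mul_zero]

lemma hf_hpow_ne_zero {a : H} (ha : a ≠ F.zero) (k : ℕ) :
    hpow F.toHyperring a k ≠ F.zero := by
  induction k with
  | zero => exact fun h => F.zero_ne_one h.symm
  | succ k ih =>
    intro h
    exact ih (hf_mul_eq_zero F ha h)

lemma hf_mul_inv_cancel {z : H} (hz : z ≠ F.zero) (x : H) :
    F.mul z (F.mul x (F.inv z)) = x := by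
  rw [F.mul_comm x (F.inv z), ← F.mul_assoc, F.mul_inv z hz, F.one_mul]

lemma hf_mul_inv_mul {z : H} (hz : z ≠ F.zero) (x : H) :
    F.mul z (F.mul (F.inv z) x) = x := by
  rw [← F.mul_assoc, F.mul_inv z hz, F.one_mul]

lemma hf_inv_mul_mul {z : H} (hz : z ≠ F.zero) (x : H) :
    F.mul (F.inv z) (F.mul x z) = x := by
  rw [F.mul_comm (F.inv z) (F.mul x z), F.mul_assoc, F.mul_inv z hz, hr_mul_one]

end FieldHelpers

section ChainLemma
variable {H : Type}

lemma hsum_singleton (R : Hyperring H) (t : H) : hsum R [t] = {t} := by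
  simp [hsum, hr_add_zero]

lemma hsum_cons_mem (R : Hyperring H) (t : H) (l : List H) (x : H) :
    x ∈ hsum R (t :: l) ↔ ∃ b ∈ hsum R l, x ∈ R.add t b := by
  simp [hsum]

lemma hsum_chain (R : Hyperring H) : ∀ (k : ℕ) (f : ℕ → H) (x : H),
    x ∈ hsum R ((List.range (k+1)).map f) ↔
      ∃ b : ℕ → H, b 0 = x ∧ b k = f k ∧ ∀ i < k, b i ∈ R.add (f i) (b (i+1)) := by
  intro k
  induction k with
  | zero =>
    intro f x
    rw [show List.range 1 = [0] by rfl]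
    simp only [List.map_cons, List.map_nil, hsum_singleton, Set.mem_singleton_iff]
    constructor
    · rintro rfl
      exact ⟨fun _ => f 0, rfl, rfl, fun i hi => absurd hi (Nat.not_lt_zero i)⟩
    · rintro ⟨b, rfl, h, -⟩
      exact h
  | succ k ih =>
    intro f x
    have hlist : (List.range (k+1+1)).map f
        = f 0 :: (List.range (k+1)).map (fun i => f (i+1)) := by
      rw [List.range_succ_eq_map, List.map_cons, List.map_map]
      rfl
    rw [hlist, hsum_cons_mem]
    constructor
    · rintro ⟨y, hy, hxy⟩
      obtain ⟨b', h0, hk, hc⟩ := (ih (fun i => f (i+1)) y).mp hy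
      refine ⟨fun i => match i with | 0 => x | (j+1) => b' j, rfl, hk, ?_⟩
      intro i hi
      match i with
      | 0 =>
        show x ∈ R.add (f 0) (b' 0)
        rw [h0]; exact hxy
      | (j+1) =>
        show b' j ∈ R.add (f (j+1)) (b' (j+1))
        exact hc j (by omega)
    · rintro ⟨b, h0, hk, hc⟩
      refine ⟨b 1, (ih (fun i => f (i+1)) (b 1)).mpr
        ⟨fun j => b (j+1), rfl, hk, fun j hj => hc (j+1) (by omega)⟩, ?_⟩
      rw [← h0]
      exact hc 0 (by omega)

end ChainLemma

/-- Baker–Lorscheid Proposition/Definition: for `p = Σᵢ₌₀ⁿ cᵢxⁱ`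
over a hyperfield `H` and `a ∈ H`, one has `0 ∈ ⊞ᵢ cᵢaⁱ` iff there are
`d₀, …, d_{n−1}` with `c₀ = −a·d₀`, `cᵢ ∈ (−a·dᵢ) ⊞ d_{i−1}` for `0 < i < n`,
and `cₙ = d_{n−1}` (i.e. `p ∈ (x − a)·q` with `q = Σ dᵢxⁱ`). -/
theorem zero_mem_eval_iff_linear_factorization {H : Type} (F : Hyperfield H)
    (n : ℕ) (hn : 1 ≤ n) (c : ℕ → H) (a : H) :
    F.zero ∈ hsum F.toHyperring
        ((List.range (n + 1)).map fun i => F.mul (c i) (hpow F.toHyperring a i)) ↔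
      ∃ d : ℕ → H,
        c 0 = F.mul (F.neg a) (d 0) ∧
        (∀ i, 1 ≤ i → i ≤ n - 1 → c i ∈ F.add (F.mul (F.neg a) (d i)) (d (i - 1))) ∧
        c n = d (n - 1) := by
  obtain ⟨m, rfl⟩ : ∃ m, n = m + 1 := ⟨n - 1, by omega⟩
  simp only [Nat.add_sub_cancel]
  rw [hsum_chain F.toHyperring (m+1) (fun i => F.mul (c i) (hpow F.toHyperring a i)) F.zero]
  have hp0 : ∀ x : H, F.mul x (hpow F.toHyperring a 0) = x :=
    fun x => hr_mul_one F.toHyperring x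
  have hp1 : hpow F.toHyperring a 1 = a := hr_mul_one F.toHyperring a
  constructor
  · rintro ⟨b, hb0, hbn, hchain⟩
    have hbn' : b (m+1) = F.mul (c (m+1)) (hpow F.toHyperring a (m+1)) := hbn
    have hchain' : ∀ i, i < m+1 →
        b i ∈ F.add (F.mul (c i) (hpow F.toHyperring a i)) (b (i+1)) := hchain
    by_cases ha : a = F.zero
    · subst ha
      have hpz : ∀ i, 1 ≤ i → hpow F.toHyperring F.zero i = F.zero := by
        intro i hi
        cases i with
        | zero => omega
        | succ j => exact F.zero_mul _
      have hbz : ∀ k, k ≤ m → b (m + 1 - k) = F.zero := by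
        intro k
        induction k with
        | zero =>
          intro _
          simp only [Nat.sub_zero]
          rw [hbn', hpz (m+1) (by omega), hr_mul_zero]
        | succ k ih =>
          intro hk
          have h1 : m + 1 - (k+1) < m + 1 := by omega
          have h2 := hchain' _ h1
          have e1 : m + 1 - (k+1) + 1 = m + 1 - k := by omega
          rw [e1, ih (by omega), hpz _ (by omega), hr_mul_zero, hr_add_zero,
            Set.mem_singleton_iff] at h2
          exact h2
      have hb1 : b 1 = F.zero := by
        have h := hbz m le_rfl
        rwa [show m + 1 - m = 1 by omega] at h
      have h0 := hchain' 0 (by omega)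
      rw [hb0, hb1, hp0, hr_add_zero, Set.mem_singleton_iff] at h0
      have hc0 : c 0 = F.zero := h0.symm
      refine ⟨fun j => c (j+1), ?_, ?_, ?_⟩
      · show c 0 = F.mul (F.neg F.zero) (c 1)
        rw [hc0, hr_neg_zero, F.zero_mul]
      · intro i h1 h2
        show c i ∈ F.add (F.mul (F.neg F.zero) (c (i+1))) (c (i-1+1))
        rw [hr_neg_zero, F.zero_mul, F.zero_add, show i - 1 + 1 = i by omega]
        exact rfl
      · show c (m+1) = c (m+1)
        rfl
    · have hP : ∀ k, hpow F.toHyperring a k ≠ F.zero := hf_hpow_ne_zero F ha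
      have hb1 : b 1 = F.neg (c 0) := by
        have h0 := hchain' 0 (by omega)
        rw [hb0, hp0] at h0
        exact F.neg_unique _ _ h0
      refine ⟨fun j => F.mul (b (j+1)) (F.inv (hpow F.toHyperring a (j+1))), ?_, ?_, ?_⟩
      · show c 0 = F.mul (F.neg a) (F.mul (b 1) (F.inv (hpow F.toHyperring a 1)))
        rw [hb1, hp1, hr_neg_mul, hf_mul_inv_cancel F ha, hr_neg_neg]
      · intro i h1 h2
        show c i ∈ F.add
          (F.mul (F.neg a) (F.mul (b (i+1)) (F.inv (hpow F.toHyperring a (i+1)))))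
          (F.mul (b (i-1+1)) (F.inv (hpow F.toHyperring a (i-1+1))))
        rw [show i - 1 + 1 = i by omega, hr_neg_mul]
        have hch := hchain' i (by omega)
        have hC : F.mul (F.inv (hpow F.toHyperring a i)) (b (i+1))
            = F.mul a (F.mul (b (i+1)) (F.inv (hpow F.toHyperring a (i+1)))) := by
          apply hf_mul_left_cancel F (hP i)
          rw [hf_mul_inv_mul F (hP i), ← F.mul_assoc, F.mul_comm (hpow F.toHyperring a i) a,
            show F.mul a (hpow F.toHyperring a i) = hpow F.toHyperring a (i+1) from rfl,
            hf_mul_inv_cancel F (hP (i+1))]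
        have h2' := hr_mul_mem F.toHyperring (F.inv (hpow F.toHyperring a i)) _ _ _ hch
        rw [hf_inv_mul_mul F (hP i), hC,
          F.mul_comm (F.inv (hpow F.toHyperring a i)) (b i)] at h2'
        exact (hr_rev_iff F.toHyperring _ _ _).mp h2'
      · show c (m+1) = F.mul (b (m+1)) (F.inv (hpow F.toHyperring a (m+1)))
        rw [hbn', F.mul_assoc, F.mul_inv _ (hP (m+1)), hr_mul_one]
  · rintro ⟨d, hd0, hdm, hdn⟩
    refine ⟨fun j => match j with
      | 0 => F.zero
      | (j+1) => F.mul (d j) (hpow F.toHyperring a (j+1)), rfl, ?_, ?_⟩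
    · show F.mul (d m) (hpow F.toHyperring a (m+1))
        = F.mul (c (m+1)) (hpow F.toHyperring a (m+1))
      rw [hdn]
    · intro i hi
      match i with
      | 0 =>
        show F.zero ∈ F.add (F.mul (c 0) (hpow F.toHyperring a 0))
          (F.mul (d 0) (hpow F.toHyperring a 1))
        rw [hp0, hp1, hd0, hr_neg_mul, F.mul_comm (d 0) a, F.add_comm]
        exact F.neg_spec _
      | (j+1) =>
        show F.mul (d j) (hpow F.toHyperring a (j+1)) ∈
          F.add (F.mul (c (j+1)) (hpow F.toHyperring a (j+1)))
            (F.mul (d (j+1)) (hpow F.toHyperring a (j+2)))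
        have hd := hdm (j+1) (by omega) (by omega)
        rw [show j + 1 - 1 = j by omega, hr_neg_mul] at hd
        have hd2 := (hr_rev_iff F.toHyperring (d j) (c (j+1)) (F.mul a (d (j+1)))).mpr hd
        have h3 := hr_mul_mem F.toHyperring (hpow F.toHyperring a (j+1)) _ _ _ hd2
        have e : F.mul (hpow F.toHyperring a (j+1)) (F.mul a (d (j+1)))
            = F.mul (d (j+1)) (hpow F.toHyperring a (j+2)) := by
          rw [← F.mul_assoc, F.mul_comm (hpow F.toHyperring a (j+1)) a,
            show F.mul a (hpow F.toHyperring a (j+1)) = hpow F.toHyperring a (j+2) from rfl,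
            F.mul_comm (hpow F.toHyperring a (j+2)) (d (j+1))]
        rw [F.mul_comm (hpow F.toHyperring a (j+1)) (d j),
          F.mul_comm (hpow F.toHyperring a (j+1)) (c (j+1)), e] at h3
        exact h3
end

section
/- Let p = Σᵢ₌₀ⁿ cᵢxⁱ over the sign hyperfield S with c₀, cₙ ≠ 0, and suppose +1 is a root of p. Let r be the index of the first sign change of p (smallest r with c_r = −c_k where k is the smallest index with c_k ≠ 0, and all nonzero cᵢ with i < r equal to c_k). Define q = Σᵢ₌₀^{n−1} dᵢxⁱ by dᵢ = −c_k for i < r (with k minimal such that c_k ≠ 0) and dᵢ = c_m for i ≥ r where m is the smallest index > i with c_m ≠ 0. Then p ∈ (x − 1)·q and Δ(q) = Δ(p) − 1. -/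
/-- Hyperaddition of the sign hyperfield `S = {0, +1, −1}` (carrier `SignType`):
`0 ⊞ x = {x}`, `1 ⊞ 1 = {1}`, `(−1) ⊞ (−1) = {−1}`, `1 ⊞ (−1) = S`. -/
def SAdd : SignType → SignType → Set SignType
  | SignType.zero, x => {x}
  | x, SignType.zero => {x}
  | SignType.pos, SignType.pos => {1}
  | SignType.neg, SignType.neg => {-1}
  | SignType.pos, SignType.neg => Set.univ
  | SignType.neg, SignType.pos => Set.univ

/-- Iterated hypersums in the sign hyperfield. -/
def Shsum : List SignType → Set SignType
  | [] => {0}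
  | a :: l => ⋃ b ∈ Shsum l, SAdd a b

/-- Number of sign changes in a list of signs. -/
def countChanges : List SignType → ℕ
  | a :: b :: l => (if a ≠ b then 1 else 0) + countChanges (b :: l)
  | _ => 0

/-- `Δ(p)`: the number of sign changes in a coefficient list, ignoring zeros. -/
def signChanges (l : List SignType) : ℕ :=
  countChanges (l.filter fun s => decide (s ≠ 0))

lemma signType_neg_ne_zero : ∀ a : SignType, a ≠ 0 → -a ≠ 0 := by decide

lemma signType_ne_neg_self : ∀ a : SignType, a ≠ 0 → a ≠ -a := by decide

lemma mem_sadd_right (a b : SignType) (hb : b ≠ 0) : b ∈ SAdd a b := by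
  cases a <;> cases b <;> simp_all [SAdd]

lemma zero_mem_sadd_neg (a : SignType) (ha : a ≠ 0) : (0 : SignType) ∈ SAdd (-a) a := by
  cases a <;> simp_all [SAdd]

lemma sadd_neg_univ (a b : SignType) (ha : a ≠ 0) : b ∈ SAdd a (-a) := by
  cases a <;> cases b <;> simp_all [SAdd]

lemma countChanges_cons_cons (a b : SignType) (l : List SignType) :
    countChanges (a :: b :: l) = (if a ≠ b then 1 else 0) + countChanges (b :: l) := rfl

lemma countChanges_cons_cons_self (a : SignType) (l : List SignType) :
    countChanges (a :: a :: l) = countChanges (a :: l) := by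
  simp [countChanges]

lemma countChanges_replicate_cons (k : ℕ) (a : SignType) (l : List SignType) :
    countChanges (List.replicate (k + 1) a ++ l) = countChanges (a :: l) := by
  induction k with
  | zero => rfl
  | succ k ih =>
    rw [List.replicate_succ, List.cons_append]
    rw [show List.replicate (k + 1) a ++ l = a :: (List.replicate k a ++ l) by
      simp [List.replicate_succ]]
    rw [countChanges_cons_cons_self]
    rw [show a :: (List.replicate k a ++ l) = List.replicate (k + 1) a ++ l by
      simp [List.replicate_succ]]
    exact ih

lemma filter_eq_replicate (a : SignType) :
    ∀ l : List SignType, (∀ x ∈ l, x = a ∨ x = 0) →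
      ∃ k, l.filter (fun s => decide (s ≠ 0)) = List.replicate k a := by
  intro l
  induction l with
  | nil => exact fun _ => ⟨0, rfl⟩
  | cons x l ih =>
    intro h
    obtain ⟨k, hk⟩ := ih fun y hy => h y (List.mem_cons_of_mem _ hy)
    rcases h x List.mem_cons_self with h1 | h1
    · subst h1
      by_cases hx : x = 0
      · refine ⟨k, ?_⟩
        rw [List.filter_cons, if_neg (by simp [hx])]
        exact hk
      · refine ⟨k + 1, ?_⟩
        rw [List.filter_cons, if_pos (by simp [hx]), hk, List.replicate_succ]
    · subst h1
      refine ⟨k, ?_⟩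
      rw [List.filter_cons, if_neg (by simp)]
      exact hk

/-- The key induction: the tail of `d` has the same sign-change structure as the
filtered tail of `c`. -/
lemma keyB (c d : ℕ → SignType) (n r : ℕ) (hcn : c n ≠ 0)
    (hstep : ∀ j, r ≤ j → j < n → d j = if c (j + 1) = 0 then d (j + 1) else c (j + 1)) :
    ∀ k j, j + k = n → r ≤ j →
      (∀ x, countChanges (x :: (List.range' j k).map d) =
        countChanges (x :: (((List.range' (j + 1) k).map c).filter fun s => decide (s ≠ 0)))) ∧
      ((List.range' j k).map d).head? =
        (((List.range' (j + 1) k).map c).filter fun s => decide (s ≠ 0)).head? := by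
  intro k
  induction k with
  | zero => intro j _ _; simp
  | succ k ih =>
    intro j hjk hrj
    have hj : j < n := by omega
    have hA : (List.range' j (k + 1)).map d = d j :: (List.range' (j + 1) k).map d := by
      rw [List.range'_succ]; simp
    have hB : (List.range' (j + 1) (k + 1)).map c
        = c (j + 1) :: (List.range' (j + 1 + 1) k).map c := by
      rw [List.range'_succ]; simp
    by_cases h1 : c (j + 1) = 0
    · -- the next coefficient is zero: it is dropped by the filter and `d j = d (j+1)`
      have hk0 : k ≠ 0 := by
        rintro rfl
        exact hcn (by rwa [show n = j + 1 by omega])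
      have hd1 : d j = d (j + 1) := by rw [hstep j hrj hj, if_pos h1]
      obtain ⟨ih1, ih2⟩ := ih (j + 1) (by omega) (by omega)
      obtain ⟨k', rfl⟩ : ∃ k', k = k' + 1 := ⟨k - 1, by omega⟩
      have hA' : (List.range' (j + 1) (k' + 1)).map d
          = d (j + 1) :: (List.range' (j + 1 + 1) k').map d := by
        rw [List.range'_succ]; simp
      -- the head of the filtered list is `d (j+1)`
      have hhead : (((List.range' (j + 1 + 1) (k' + 1)).map c).filter
          fun s => decide (s ≠ 0)).head? = some (d (j + 1)) := by
        rw [← ih2, hA']; simp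
      obtain ⟨B', hB'⟩ : ∃ B', ((List.range' (j + 1 + 1) (k' + 1)).map c).filter
          (fun s => decide (s ≠ 0)) = d (j + 1) :: B' := by
        rcases hF : ((List.range' (j + 1 + 1) (k' + 1)).map c).filter
            (fun s => decide (s ≠ 0)) with _ | ⟨b, B'⟩
        · rw [hF] at hhead; simp at hhead
        · rw [hF] at hhead; simp at hhead; exact ⟨B', by rw [hhead]⟩
      have hfB : ((List.range' (j + 1) (k' + 1 + 1)).map c).filter (fun s => decide (s ≠ 0))
          = d (j + 1) :: B' := by
        rw [hB, List.filter_cons, if_neg (by simp [h1]), hB']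
      constructor
      · intro x
        rw [hA, hfB, hd1, hA']
        have e1 := ih1 (d (j + 1))
        rw [hA', hB', countChanges_cons_cons_self, countChanges_cons_cons_self] at e1
        rw [countChanges_cons_cons, countChanges_cons_cons, countChanges_cons_cons, e1]
        simp
      · rw [hA, hfB, hd1]
        simp
    · -- the next coefficient is nonzero: `d j = c (j+1)` and the filter keeps it
      have hd1 : d j = c (j + 1) := by rw [hstep j hrj hj, if_neg h1]
      obtain ⟨ih1, ih2⟩ := ih (j + 1) (by omega) (by omega)
      have hfB : ((List.range' (j + 1) (k + 1)).map c).filter (fun s => decide (s ≠ 0))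
          = c (j + 1) :: ((List.range' (j + 1 + 1) k).map c).filter (fun s => decide (s ≠ 0)) := by
        rw [hB, List.filter_cons, if_pos (by simp [h1])]
      constructor
      · intro x
        rw [hA, hfB, hd1]
        rw [countChanges_cons_cons, countChanges_cons_cons, ih1 (c (j + 1))]
      · rw [hA, hfB, hd1]
        simp

/-- let `p = Σᵢ₌₀ⁿ cᵢxⁱ` over the sign hyperfield with
`c₀, cₙ ≠ 0` and `+1` a root of `p`.  Let `r` be the index of the first sign
change and define `q = Σ dᵢxⁱ` by `dᵢ = −c₀` for `i < r` and `dᵢ = c_m`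
(`m` the least index `> i` with `c_m ≠ 0`) for `i ≥ r`.  Then `p ∈ (x − 1)·q`
and `Δ(q) = Δ(p) − 1`. -/
theorem descartes_factorization_step (n : ℕ) (hn : 0 < n) (c : ℕ → SignType)
    (h0 : c 0 ≠ 0) (hcn : c n ≠ 0)
    -- `+1` is a root of `p`:
    (hroot : (0 : SignType) ∈ Shsum ((List.range (n + 1)).map fun i => c i * 1 ^ i))
    -- `r` is the index of the first sign change:
    (r : ℕ) (hrn : r ≤ n) (hr : c r = -(c 0))
    (hfirst : ∀ i < r, c i = c 0 ∨ c i = 0)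
    -- the definition of `q`:
    (d : ℕ → SignType)
    (hd : ∀ i, d i = if i < r then -(c 0) else c (sInf {m : ℕ | i < m ∧ c m ≠ 0})) :
    -- `p ∈ (x − 1)·q`:
    (c 0 = -(d 0) ∧
      (∀ i, 0 < i → i < n → c i ∈ SAdd (-(d i)) (d (i - 1))) ∧
      c n = d (n - 1)) ∧
    -- `Δ(q) = Δ(p) − 1`:
    signChanges ((List.range n).map d) + 1 =
      signChanges ((List.range (n + 1)).map c) := by
  have hcr : c r ≠ 0 := by
    rw [hr]; exact signType_neg_ne_zero _ h0
  have hr1 : 0 < r := by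
    rcases Nat.eq_zero_or_pos r with h | h
    · exfalso; rw [h] at hr; revert hr h0; cases c 0 <;> decide
    · exact h
  have hne : ∀ i, i < n → {m : ℕ | i < m ∧ c m ≠ 0}.Nonempty := fun i hi => ⟨n, hi, hcn⟩
  have hmem : ∀ i, i < n → sInf {m : ℕ | i < m ∧ c m ≠ 0} ∈ {m : ℕ | i < m ∧ c m ≠ 0} :=
    fun i hi => Nat.sInf_mem (hne i hi)
  have hd_ne : ∀ i, i < n → d i ≠ 0 := by
    intro i hi
    rw [hd i]
    split
    · exact signType_neg_ne_zero _ h0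
    · exact (hmem i hi).2
  have hinf_succ : ∀ i, c (i + 1) ≠ 0 → sInf {m : ℕ | i < m ∧ c m ≠ 0} = i + 1 := by
    intro i h1
    exact IsLeast.csInf_eq ⟨⟨by omega, h1⟩, fun m hm => hm.1⟩
  have hinf_zero : ∀ i, c (i + 1) = 0 →
      {m : ℕ | i < m ∧ c m ≠ 0} = {m : ℕ | i + 1 < m ∧ c m ≠ 0} := by
    intro i h1
    ext m
    simp only [Set.mem_setOf_eq]
    constructor
    · rintro ⟨hm1, hm2⟩
      have hne' : m ≠ i + 1 := fun e => hm2 (e ▸ h1)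
      exact ⟨by omega, hm2⟩
    · rintro ⟨hm1, hm2⟩; exact ⟨by omega, hm2⟩
  have hstep : ∀ j, r ≤ j → j < n →
      d j = if c (j + 1) = 0 then d (j + 1) else c (j + 1) := by
    intro j hrj hj
    rw [hd j, if_neg (by omega)]
    split
    · next h1 =>
      rw [hinf_zero j h1, hd (j + 1), if_neg (by omega)]
    · next h1 =>
      rw [hinf_succ j h1]
  refine ⟨⟨?_, ?_, ?_⟩, ?_⟩
  · -- c 0 = -(d 0)
    rw [hd 0, if_pos hr1, neg_neg]
  · -- middle coefficients
    intro i hi0 hin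
    rcases lt_trichotomy i r with h | h | h
    · rw [hd i, if_pos h, hd (i - 1), if_pos (by omega), neg_neg]
      exact sadd_neg_univ _ _ h0
    · subst h
      rw [hd (i - 1), if_pos (by omega), ← hr]
      exact mem_sadd_right _ _ hcr
    · rw [hd (i - 1), if_neg (by omega)]
      by_cases hci : c i = 0
      · have hset : {m : ℕ | i - 1 < m ∧ c m ≠ 0} = {m : ℕ | i < m ∧ c m ≠ 0} := by
          ext m
          simp only [Set.mem_setOf_eq]
          constructor
          · rintro ⟨hm1, hm2⟩
            have hne' : m ≠ i := fun e => hm2 (e ▸ hci)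
            exact ⟨by omega, hm2⟩
          · rintro ⟨hm1, hm2⟩; exact ⟨by omega, hm2⟩
        rw [hset, show c (sInf {m : ℕ | i < m ∧ c m ≠ 0}) = d i from by
          rw [hd i, if_neg (by omega)]]
        rw [hci]
        exact zero_mem_sadd_neg _ (hd_ne i hin)
      · have : sInf {m : ℕ | i - 1 < m ∧ c m ≠ 0} = i :=
          IsLeast.csInf_eq ⟨⟨by omega, hci⟩, fun m hm => by
            have := hm.1; omega⟩
        rw [this]
        exact mem_sadd_right _ _ hci
  · -- c n = d (n - 1)
    by_cases hrn' : r = n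
    · rw [hd (n - 1), if_pos (by omega), ← hr, hrn']
    · have hrn2 : r < n := lt_of_le_of_ne hrn hrn'
      rw [hd (n - 1), if_neg (by omega)]
      have : sInf {m : ℕ | n - 1 < m ∧ c m ≠ 0} = n :=
        IsLeast.csInf_eq ⟨⟨by omega, hcn⟩, fun m hm => by
          have := hm.1; omega⟩
      rw [this]
  · -- the sign-change count
    have hkeyB := keyB c d n r hcn hstep (n - r) r (by omega) le_rfl
    -- d on range' 0 r is constant -(c 0)
    have hrepd : ∀ k s, s + k ≤ r → (List.range' s k).map d = List.replicate k (-(c 0)) := by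
      intro k
      induction k with
      | zero => intro s _; simp
      | succ k ih =>
        intro s hs
        rw [List.range'_succ]
        simp only [List.map_cons, List.replicate_succ]
        rw [hd s, if_pos (by omega), ih (s + 1) (by omega)]
    -- split ranges
    have hsplitd : List.range n = List.range' 0 r ++ List.range' r (n - r) := by
      rw [List.range_eq_range']
      have h2 : n - r + r = n := by omega
      have : List.range' 0 r 1 ++ List.range' (0 + 1 * r) (n - r) 1 = List.range' 0 (n - r + r) 1 := by
        rw [Nat.add_comm (n - r) r]; exact List.range'_append
      simp only [Nat.one_mul, Nat.zero_add] at this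
      rw [h2] at this
      exact this.symm
    have hsplitc : List.range (n + 1) = List.range' 0 r ++ (r :: List.range' (r + 1) (n - r)) := by
      rw [List.range_eq_range']
      have h2 : n - r + 1 + r = n + 1 := by omega
      have : List.range' 0 r 1 ++ List.range' (0 + 1 * r) (n - r + 1) 1 = List.range' 0 (n - r + 1 + r) 1 := by
        rw [Nat.add_comm (n - r + 1) r]; exact List.range'_append
      simp only [Nat.one_mul, Nat.zero_add] at this
      rw [h2] at this
      rw [← this, List.range'_succ]
    -- d list: no zeros, so the filter is the identity
    have hdfilter : ((List.range n).map d).filter (fun s => decide (s ≠ 0))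
        = (List.range n).map d := by
      rw [List.filter_eq_self]
      intro a ha
      simp only [List.mem_map, List.mem_range] at ha
      obtain ⟨i, hi, rfl⟩ := ha
      simpa using hd_ne i hi
    -- compute the d-side
    obtain ⟨r', rfl⟩ : ∃ r', r = r' + 1 := ⟨r - 1, by omega⟩
    have hdcount : signChanges ((List.range n).map d)
        = countChanges (c (r' + 1) :: (List.range' (r' + 1) (n - (r' + 1))).map d) := by
      unfold signChanges
      rw [hdfilter, hsplitd, List.map_append, hrepd (r' + 1) 0 (by omega),
        countChanges_replicate_cons, hr]
    -- compute the c-side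
    obtain ⟨t, ht⟩ := filter_eq_replicate (c 0) ((List.range' 0 (r' + 1)).map c) (by
      intro x hx
      simp only [List.mem_map, List.mem_range'_1] at hx
      obtain ⟨i, hi, rfl⟩ := hx
      exact hfirst i (by omega))
    have ht0 : t ≠ 0 := by
      rintro rfl
      have : c 0 ∈ ((List.range' 0 (r' + 1)).map c).filter (fun s => decide (s ≠ 0)) := by
        rw [List.mem_filter]
        refine ⟨List.mem_map.mpr ⟨0, ?_, rfl⟩, by simpa using h0⟩
        rw [List.mem_range'_1]; omega
      rw [ht] at this
      simp at this
    obtain ⟨t', rfl⟩ : ∃ t', t = t' + 1 := ⟨t - 1, by omega⟩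
    have hccount : signChanges ((List.range (n + 1)).map c)
        = countChanges (c 0 :: c (r' + 1) ::
            (((List.range' (r' + 1 + 1) (n - (r' + 1))).map c).filter fun s => decide (s ≠ 0))) := by
      unfold signChanges
      rw [hsplitc, List.map_append, List.filter_append, ht, List.map_cons,
        List.filter_cons, if_pos (by simpa using hcr)]
      rw [countChanges_replicate_cons]
    rw [hdcount, hccount]
    have hB1 := (hkeyB.1 (c (r' + 1)))
    rw [hB1]
    have hne01 : c 0 ≠ c (r' + 1) := by
      rw [hr]; exact signType_ne_neg_self _ h0
    show countChanges (c (r' + 1) :: _) + 1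
        = (if c 0 ≠ c (r' + 1) then 1 else 0) + countChanges (c (r' + 1) :: _)
    rw [if_pos hne01]
    omega
end
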